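/- Let v : ℝ → ℝ be continuous with v(x + T) = v(x) for all x, where T > 0, and let E ∈ ℝ. Let f₁, f₂ : ℝ → ℝ be twice differentiable solutions of −f'' + (v − E) f = 0 with f₁(0) = 1, f₁'(0) = 0, f₂(0) = 0, f₂'(0) = 1. If |f₁(T) + f₂'(T)| < 2, then every twice differentiable solution f : ℝ → ℝ of −f'' + (v − E) f = 0 is bounded on ℝ. -/

import Mathlib

open Set

lemma ivp_zero_nonneg (v : ℝ → ℝ) (hv : Continuous v) (E : ℝ) (d : ℝ → ℝ)
    (hd : Differentiable ℝ d) (hd' : Differentiable ℝ (deriv d))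
    (heq : ∀ x, deriv (deriv d) x = (v x - E) * d x)
    (h0 : d 0 = 0) (h0' : deriv d 0 = 0) :
    ∀ x, 0 ≤ x → d x = 0 := by
  intro b hb
  obtain ⟨K, hK⟩ : ∃ K, ∀ s ∈ Icc (0:ℝ) b, max 1 |v s - E| ≤ K := by
    obtain ⟨z, hz, hz'⟩ := isCompact_Icc.exists_isMaxOn (Set.nonempty_Icc.2 hb)
      ((continuous_const.max ((hv.sub continuous_const).abs)).continuousOn)
    exact ⟨_, fun s hs => hz' hs⟩
  have hK1 : (1:ℝ) ≤ K := le_trans (le_max_left _ _) (hK 0 ⟨le_refl _, hb⟩)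
  set y : ℝ → ℝ × ℝ := fun s => (d s, deriv d s) with hy
  have hcont : ContinuousOn y (Icc 0 b) :=
    (hd.continuous.prodMk hd'.continuous).continuousOn
  have hderiv : ∀ s ∈ Ico (0:ℝ) b,
      HasDerivWithinAt y (deriv d s, (v s - E) * d s) (Ici s) s := by
    intro s _
    have h1 : HasDerivAt d (deriv d s) s := (hd s).hasDerivAt
    have h2 : HasDerivAt (deriv d) ((v s - E) * d s) s := by
      have h := (hd' s).hasDerivAt
      rwa [heq s] at h
    exact (h1.prodMk h2).hasDerivWithinAt
  have hbound : ∀ s ∈ Ico (0:ℝ) b,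
      ‖(deriv d s, (v s - E) * d s)‖ ≤ K * ‖y s‖ + 0 := by
    intro s hs
    have hs' : s ∈ Icc (0:ℝ) b := Ico_subset_Icc_self hs
    have hKs : |v s - E| ≤ K := le_trans (le_max_right _ _) (hK s hs')
    rw [add_zero, Prod.norm_def, Prod.norm_def]
    simp only [Real.norm_eq_abs]
    have hm : (0:ℝ) ≤ max |d s| |deriv d s| := le_trans (abs_nonneg _) (le_max_left _ _)
    apply max_le
    · nlinarith [le_max_right |d s| |deriv d s|]
    · rw [abs_mul]
      exact mul_le_mul hKs (le_max_left _ _) (abs_nonneg _) (by linarith)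
  have hfin := norm_le_gronwallBound_of_norm_deriv_right_le (δ := 0) (ε := 0) hcont hderiv
    (by simp [hy, Prod.norm_def, h0, h0']) hbound b (right_mem_Icc.2 hb)
  rw [gronwallBound_ε0_δ0] at hfin
  have h1 : |d b| ≤ ‖y b‖ := by
    rw [Prod.norm_def]; simp only [Real.norm_eq_abs]; exact le_max_left _ _
  exact abs_eq_zero.1 (le_antisymm (h1.trans hfin) (abs_nonneg _))

lemma ivp_zero (v : ℝ → ℝ) (hv : Continuous v) (E : ℝ) (d : ℝ → ℝ)
    (hd : Differentiable ℝ d) (hd' : Differentiable ℝ (deriv d))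
    (heq : ∀ x, deriv (deriv d) x = (v x - E) * d x)
    (h0 : d 0 = 0) (h0' : deriv d 0 = 0) : ∀ x, d x = 0 := by
  intro x
  rcases le_or_gt 0 x with hx | hx
  · exact ivp_zero_nonneg v hv E d hd hd' heq h0 h0' x hx
  · set g : ℝ → ℝ := fun s => d (-s) with hgdef
    have hg : Differentiable ℝ g := hd.comp differentiable_neg
    have hgd : deriv g = fun s => -deriv d (-s) := funext fun s => deriv_comp_neg d s
    have hgd' : Differentiable ℝ (deriv g) := by
      rw [hgd]; exact (hd'.comp differentiable_neg).neg
    have hgeq : ∀ s, deriv (deriv g) s = ((fun s => v (-s)) s - E) * g s := by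
      intro s
      rw [hgd]
      have e1 : deriv (fun s => -deriv d (-s)) s = -deriv (fun s => deriv d (-s)) s := by
        simp [deriv.neg]
      rw [e1, deriv_comp_neg (deriv d) s, neg_neg, heq (-s)]
    have hz := ivp_zero_nonneg (fun s => v (-s)) (hv.comp continuous_neg) E g hg hgd' hgeq
      (by simp [hgdef, h0]) (by simp [hgd, h0']) (-x) (by linarith)
    simpa [hgdef] using hz

lemma sol_rep (E : ℝ) (v : ℝ → ℝ) (hv : Continuous v)
    (f₁ f₂ : ℝ → ℝ)
    (hd₁ : Differentiable ℝ f₁) (hd₁' : Differentiable ℝ (deriv f₁))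
    (hd₂ : Differentiable ℝ f₂) (hd₂' : Differentiable ℝ (deriv f₂))
    (he₁ : ∀ x, -(deriv (deriv f₁) x) + (v x - E) * f₁ x = 0)
    (he₂ : ∀ x, -(deriv (deriv f₂) x) + (v x - E) * f₂ x = 0)
    (h₁0 : f₁ 0 = 1) (h₁0' : deriv f₁ 0 = 0)
    (h₂0 : f₂ 0 = 0) (h₂0' : deriv f₂ 0 = 1)
    (f : ℝ → ℝ) (hdf : Differentiable ℝ f) (hdf' : Differentiable ℝ (deriv f))
    (hef : ∀ x, -(deriv (deriv f) x) + (v x - E) * f x = 0) :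
    (∀ x, f x = f 0 * f₁ x + deriv f 0 * f₂ x) ∧
    (∀ x, deriv f x = f 0 * deriv f₁ x + deriv f 0 * deriv f₂ x) := by
  set p := f 0 with hp
  set q := deriv f 0 with hq
  set d : ℝ → ℝ := fun x => f x - (p * f₁ x + q * f₂ x) with hddef
  have hdd : Differentiable ℝ d := hdf.sub ((hd₁.const_mul p).add (hd₂.const_mul q))
  have hderiv : deriv d = fun x => deriv f x - (p * deriv f₁ x + q * deriv f₂ x) := by
    funext x
    rw [hddef]
    rw [deriv_fun_sub (g := fun y => p * f₁ y + q * f₂ y) (hdf x) (((hd₁ x).const_mul p).add ((hd₂ x).const_mul q)),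
        deriv_fun_add (f := fun y => p * f₁ y) (g := fun y => q * f₂ y) ((hd₁ x).const_mul p) ((hd₂ x).const_mul q),
        deriv_const_mul p (hd₁ x), deriv_const_mul q (hd₂ x)]
  have hdd' : Differentiable ℝ (deriv d) := by
    rw [hderiv]; exact hdf'.sub ((hd₁'.const_mul p).add (hd₂'.const_mul q))
  have heqd : ∀ x, deriv (deriv d) x = (v x - E) * d x := by
    intro x
    rw [hderiv]
    rw [deriv_fun_sub (g := fun y => p * deriv f₁ y + q * deriv f₂ y) (hdf' x) (((hd₁' x).const_mul p).add ((hd₂' x).const_mul q)),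
        deriv_fun_add (f := fun y => p * deriv f₁ y) (g := fun y => q * deriv f₂ y) ((hd₁' x).const_mul p) ((hd₂' x).const_mul q),
        deriv_const_mul p (hd₁' x), deriv_const_mul q (hd₂' x)]
    have e1 := hef x; have e2 := he₁ x; have e3 := he₂ x
    rw [hddef]
    have hgoal : deriv (deriv f) x - (p * deriv (deriv f₁) x + q * deriv (deriv f₂) x) =
        (v x - E) * (f x - (p * f₁ x + q * f₂ x)) := by
      linear_combination (-1) * e1 + p * e2 + q * e3
    exact hgoal
  have hz := ivp_zero v hv E d hdd hdd' heqd
    (by rw [hddef]; simp [h₁0, h₂0, hp])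
    (by rw [hderiv]; simp [h₁0', h₂0', hq])
  constructor
  · intro x
    have h2 : f x - (p * f₁ x + q * f₂ x) = 0 := hz x
    linarith
  · intro x
    have hdz : d = fun _ => (0:ℝ) := funext hz
    have : deriv d x = 0 := by rw [hdz]; simp
    rw [hderiv] at this
    have h2 : deriv f x - (p * deriv f₁ x + q * deriv f₂ x) = 0 := this
    linarith

lemma shift_sol (T E : ℝ) (v : ℝ → ℝ) (hvper : ∀ x, v (x + T) = v x)
    (f : ℝ → ℝ) (hdf : Differentiable ℝ f) (hdf' : Differentiable ℝ (deriv f))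
    (hef : ∀ x, -(deriv (deriv f) x) + (v x - E) * f x = 0) :
    Differentiable ℝ (fun x => f (x + T)) ∧
    deriv (fun x => f (x + T)) = (fun x => deriv f (x + T)) ∧
    Differentiable ℝ (deriv (fun x => f (x + T))) ∧
    (∀ x, -(deriv (deriv (fun x => f (x + T))) x) + (v x - E) * f (x + T) = 0) := by
  have hdg : Differentiable ℝ (fun x => f (x + T)) := hdf.comp (differentiable_id.add_const T)
  have hgd : deriv (fun x => f (x + T)) = fun x => deriv f (x + T) :=
    funext fun x => deriv_comp_add_const f T x
  have hdg' : Differentiable ℝ (deriv (fun x => f (x + T))) := by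
    rw [hgd]; exact hdf'.comp (differentiable_id.add_const T)
  refine ⟨hdg, hgd, hdg', ?_⟩
  intro x
  have h2 : deriv (deriv (fun x => f (x + T))) x = deriv (deriv f) (x + T) := by
    rw [hgd]; exact deriv_comp_add_const (deriv f) T x
  rw [h2]
  have := hef (x + T)
  rwa [hvper x] at this

set_option maxHeartbeats 1000000 in
theorem all_solutions_bounded_from_small_trace
    (T E : ℝ) (hT : 0 < T) (v : ℝ → ℝ) (hv : Continuous v)
    (hvper : ∀ x, v (x + T) = v x)
    (f₁ f₂ : ℝ → ℝ)
    (hd₁ : Differentiable ℝ f₁) (hd₁' : Differentiable ℝ (deriv f₁))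
    (hd₂ : Differentiable ℝ f₂) (hd₂' : Differentiable ℝ (deriv f₂))
    (he₁ : ∀ x, -(deriv (deriv f₁) x) + (v x - E) * f₁ x = 0)
    (he₂ : ∀ x, -(deriv (deriv f₂) x) + (v x - E) * f₂ x = 0)
    (h₁0 : f₁ 0 = 1) (h₁0' : deriv f₁ 0 = 0)
    (h₂0 : f₂ 0 = 0) (h₂0' : deriv f₂ 0 = 1)
    (htr : |f₁ T + deriv f₂ T| < 2) :
    ∀ f : ℝ → ℝ, Differentiable ℝ f → Differentiable ℝ (deriv f) →
      (∀ x, -(deriv (deriv f) x) + (v x - E) * f x = 0) →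
      ∃ C, ∀ x, |f x| ≤ C := by
  intro f hdf hdf' hef
  set t := f₁ T + deriv f₂ T with htdef
  set a := f₁ T with hadef
  set b := deriv f₁ T with hbdef
  set c := f₂ T with hcdef
  set e := deriv f₂ T with hedef
  -- Wronskian
  have hw : a * e - c * b = 1 := by
    set W : ℝ → ℝ := fun x => f₁ x * deriv f₂ x - f₂ x * deriv f₁ x with hWdef
    have hWd : Differentiable ℝ W := (hd₁.mul hd₂').sub (hd₂.mul hd₁')
    have hW' : ∀ x, deriv W x = 0 := by
      intro x
      simp only [hWdef]
      rw [deriv_fun_sub (f := fun y => f₁ y * deriv f₂ y) (g := fun y => f₂ y * deriv f₁ y) ((hd₁ x).mul (hd₂' x)) ((hd₂ x).mul (hd₁' x)),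
          deriv_fun_mul (hd₁ x) (hd₂' x), deriv_fun_mul (hd₂ x) (hd₁' x)]
      have e2 := he₁ x; have e3 := he₂ x
      linear_combination f₂ x * e2 - f₁ x * e3
    have hconst := is_const_of_deriv_eq_zero hWd hW' T 0
    simp only [hWdef, h₁0, h₁0', h₂0, h₂0'] at hconst
    rw [hadef, hbdef, hcdef, hedef]
    nlinarith [hconst]
  -- translation identity for any solution
  have key : ∀ g : ℝ → ℝ, Differentiable ℝ g → Differentiable ℝ (deriv g) →
      (∀ x, -(deriv (deriv g) x) + (v x - E) * g x = 0) →
      ∀ x, g (x + T) = g T * f₁ x + deriv g T * f₂ x := by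
    intro g hdg hdg' heg
    obtain ⟨hs1, hs2, hs3, hs4⟩ := shift_sol T E v hvper g hdg hdg' heg
    obtain ⟨hrep, _⟩ := sol_rep E v hv f₁ f₂ hd₁ hd₁' hd₂ hd₂' he₁ he₂ h₁0 h₁0' h₂0 h₂0'
      (fun x => g (x + T)) hs1 hs3 hs4
    intro x
    have h := hrep x
    simpa [hs2] using h
  -- representation of f and its derivative
  obtain ⟨hrepf, hrepf'⟩ := sol_rep E v hv f₁ f₂ hd₁ hd₁' hd₂ hd₂' he₁ he₂ h₁0 h₁0' h₂0 h₂0'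
    f hdf hdf' hef
  have hp : f T = f 0 * a + deriv f 0 * c := by rw [hadef, hcdef]; exact hrepf T
  have hq : deriv f T = f 0 * b + deriv f 0 * e := by rw [hbdef, hedef]; exact hrepf' T
  have hA1 := key f₁ hd₁ hd₁' he₁
  have hA2 := key f₂ hd₂ hd₂' he₂
  have hAf := key f hdf hdf' hef
  -- recurrence
  have recur : ∀ x, f (x + 2*T) = t * f (x + T) - f x := by
    intro x
    have e0 : x + 2*T = x + T + T := by ring
    rw [e0, hAf (x + T), hA1 x, hA2 x, hAf x, hrepf x, hp, hq, htdef]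
    linear_combination (-(f 0 * f₁ x + deriv f 0 * f₂ x)) * hw
  -- bound constants
  have hab := abs_lt.1 htr
  have ht2 : t^2 < 4 := by nlinarith [hab.1, hab.2]
  have hden : 0 < 1 - t^2/4 := by nlinarith
  obtain ⟨C₀, hC₀⟩ : ∃ C₀, ∀ y ∈ Set.Icc (0:ℝ) (2*T), |f y| ≤ C₀ := by
    obtain ⟨z, hz, hz'⟩ := (isCompact_Icc (a := (0:ℝ)) (b := 2*T)).exists_isMaxOn
      (Set.nonempty_Icc.2 (by linarith)) (hdf.continuous.abs.continuousOn)
    exact ⟨_, fun s hs => hz' hs⟩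
  have hC₀0 : 0 ≤ C₀ := le_trans (abs_nonneg _) (hC₀ 0 ⟨le_refl _, by linarith⟩)
  refine ⟨Real.sqrt (4*C₀^2 / (1 - t^2/4)), ?_⟩
  intro x
  set n : ℤ := ⌊x / T⌋ with hndef
  set x₀ : ℝ := x - n * T with hx₀def
  have hn1 : (n:ℝ) ≤ x / T := Int.floor_le _
  have hn2 : x / T < n + 1 := Int.lt_floor_add_one _
  have hx₀0 : 0 ≤ x₀ := by
    rw [hx₀def]
    have h1 : (n:ℝ) * T ≤ x := by
      have h2 := mul_le_mul_of_nonneg_right hn1 (le_of_lt hT)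
      rwa [div_mul_cancel₀ _ (ne_of_gt hT)] at h2
    linarith
  have hx₀T : x₀ < T := by
    rw [hx₀def]
    have h1 : x < ((n:ℝ) + 1) * T := by
      have h2 := mul_lt_mul_of_pos_right hn2 hT
      rwa [div_mul_cancel₀ _ (ne_of_gt hT)] at h2
    nlinarith
  set u : ℤ → ℝ := fun k => f (x₀ + k * T) with hudef
  have hrec : ∀ k : ℤ, u (k + 2) = t * u (k + 1) - u k := by
    intro k
    have e1 : x₀ + ((k:ℝ) + 2) * T = x₀ + (k:ℝ) * T + 2*T := by ring
    have e2 : x₀ + ((k:ℝ) + 1) * T = x₀ + (k:ℝ) * T + T := by ring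
    simp only [hudef]
    push_cast
    rw [e1, e2, recur]
  set Q : ℤ → ℝ := fun k => u k^2 + u (k+1)^2 - t * u k * u (k+1) with hQdef
  have hstep : ∀ k : ℤ, Q (k + 1) = Q k := by
    intro k
    have h := hrec k
    simp only [hQdef]
    have e4 : k + 1 + 1 = k + 2 := by ring
    rw [e4, h]
    ring
  have hQ : ∀ k : ℤ, Q k = Q 0 := by
    intro k
    induction k using Int.induction_on with
    | zero => rfl
    | succ i ih => rw [hstep i]; exact ih
    | pred i ih =>
      have h := hstep (-(i:ℤ) - 1)
      have e4 : (-(i:ℤ) - 1 + 1) = -(i:ℤ) := by ring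
      rw [e4] at h
      rw [← h]; exact ih
  -- bounds on u
  have hu0 : |u 0| ≤ C₀ := by
    have e4 : x₀ + ((0:ℤ):ℝ) * T = x₀ := by push_cast; ring
    simp only [hudef]
    rw [e4]
    exact hC₀ x₀ ⟨hx₀0, by linarith⟩
  have hu1 : |u 1| ≤ C₀ := by
    have e4 : x₀ + ((1:ℤ):ℝ) * T = x₀ + T := by push_cast; ring
    simp only [hudef]
    rw [e4]
    exact hC₀ (x₀ + T) ⟨by linarith, by linarith⟩
  have hsq0 : u 0^2 ≤ C₀^2 := by nlinarith [abs_le.1 hu0, abs_nonneg (u 0)]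
  have hsq1 : u 1^2 ≤ C₀^2 := by nlinarith [abs_le.1 hu1, abs_nonneg (u 1)]
  have hcross : -(t * u 0 * u 1) ≤ 2 * C₀^2 := by
    have h1 : -(t * u 0 * u 1) ≤ |t * u 0 * u 1| := neg_le_abs _
    have h2 : |t * u 0 * u 1| = |t| * |u 0| * |u 1| := by rw [abs_mul, abs_mul]
    have h3 : |t| * |u 0| * |u 1| ≤ 2 * C₀ * C₀ := by
      apply mul_le_mul _ hu1 (abs_nonneg _) (by positivity)
      exact mul_le_mul htr.le hu0 (abs_nonneg _) (by norm_num)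
    nlinarith [h1, h2, h3]
  have hQ0 : Q 0 ≤ 4 * C₀^2 := by
    simp only [hQdef]
    norm_num
    nlinarith [hsq0, hsq1, hcross]
  have hun : (1 - t^2/4) * (u n)^2 ≤ Q n := by
    simp only [hQdef]
    nlinarith [sq_nonneg (u (n+1) - t * u n / 2)]
  have hfx : f x = u n := by
    simp only [hudef]
    congr 1
    rw [hx₀def]; ring
  rw [hfx, ← Real.sqrt_sq_eq_abs]
  apply Real.sqrt_le_sqrt
  rw [le_div_iff₀ hden]
  calc u n^2 * (1 - t^2/4) = (1 - t^2/4) * (u n)^2 := by ring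
    _ ≤ Q n := hun
    _ = Q 0 := hQ n
    _ ≤ 4 * C₀^2 := hQ0
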